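/- The group Γ is torsion-free: every non-identity element of Γ has infinite order. -/

import Mathlib

namespace PinkGroup

mutual
  /-- forward action of the generator `a` -/
  def aF : List Bool → List Bool
    | [] => []
    | false :: w => true :: bF w
    | true :: w => false :: w
  /-- forward action of the generator `b` -/
  def bF : List Bool → List Bool
    | [] => []
    | false :: w => false :: aF w
    | true :: w => true :: w
end

mutual
  /-- inverse of `aF` -/
  def aIF : List Bool → List Bool
    | [] => []
    | true :: w => false :: bIF w
    | false :: w => true :: w
  /-- inverse of `bF` -/
  def bIF : List Bool → List Bool
    | [] => []
    | false :: w => false :: aIF w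
    | true :: w => true :: w
end

lemma inv_all (w : List Bool) :
    aF (aIF w) = w ∧ bF (bIF w) = w ∧ aIF (aF w) = w ∧ bIF (bF w) = w := by
  induction w with
  | nil => simp [aF, bF, aIF, bIF]
  | cons x w ih =>
    cases x <;>
      simp [aF, bF, aIF, bIF, ih.1, ih.2.1, ih.2.2.1, ih.2.2.2]

/-- The generator `a` of Pink's group: `(1w)^a = 2 w^b`, `(2w)^a = 1w`
(where the letter `1` is `false` and the letter `2` is `true`). -/
def a : Equiv.Perm (List Bool) :=
  ⟨aF, aIF, fun w => (inv_all w).2.2.1, fun w => (inv_all w).1⟩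

/-- The generator `b` of Pink's group: `(1w)^b = 1 w^a`, `(2w)^b = 2w`. -/
def b : Equiv.Perm (List Bool) :=
  ⟨bF, bIF, fun w => (inv_all w).2.2.2, fun w => (inv_all w).2.1⟩

/-- Pink's group `Γ`, the iterated monodromy group of `z^2 - 1`. -/
def Gam : Subgroup (Equiv.Perm (List Bool)) := Subgroup.closure {a, b}

lemma a_mem : a ∈ Gam := Subgroup.subset_closure (by simp)

lemma b_mem : b ∈ Gam := Subgroup.subset_closure (by simp)


inductive Letter | A | A' | B | B'
deriving DecidableEq

open Letter

def gen : Letter → Equiv.Perm (List Bool)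
  | A => a
  | A' => a⁻¹
  | B => b
  | B' => b⁻¹

def ev (w : List Letter) : Equiv.Perm (List Bool) := (w.map gen).prod

def isA : Letter → Bool
  | A => true
  | A' => true
  | _ => false

def countA (w : List Letter) : ℕ := w.countP isA
def countB (w : List Letter) : ℕ := w.countP (fun x => !isA x)

def act (w : List Letter) : Bool := decide (countA w % 2 = 1)

def secL : Letter → Bool → List Letter
  | A, false => [B]
  | A, true => []
  | A', true => [B']
  | A', false => []
  | B, false => [A]
  | B, true => []
  | B', false => [A']
  | B', true => []

def sec (c : Bool) : List Letter → List Letter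
  | [] => []
  | x :: rest => secL x (xor (act rest) c) ++ sec c rest

@[simp] lemma ev_nil : ev [] = 1 := rfl

lemma ev_cons (x : Letter) (w : List Letter) : ev (x :: w) = gen x * ev w := by
  simp [ev]

lemma ev_append (u v : List Letter) : ev (u ++ v) = ev u * ev v := by
  simp [ev]

@[simp] lemma ev_apply_nil (w : List Letter) : ev w [] = [] := by
  induction w with
  | nil => rfl
  | cons x w ih =>
    rw [ev_cons, Equiv.Perm.mul_apply, ih]
    cases x <;> rfl

lemma countA_cons (x : Letter) (w : List Letter) :
    countA (x :: w) = countA w + (if isA x then 1 else 0) := by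
  simp [countA, List.countP_cons]

lemma countA_append (u v : List Letter) : countA (u ++ v) = countA u + countA v := by
  simp [countA, List.countP_append]

lemma countB_append (u v : List Letter) : countB (u ++ v) = countB u + countB v := by
  simp [countB, List.countP_append]

lemma act_cons (x : Letter) (w : List Letter) :
    act (x :: w) = xor (isA x) (act w) := by
  rw [act, act, countA_cons]
  cases hx : isA x <;> cases h : decide (countA w % 2 = 1) <;>
    simp_all <;> omega

lemma act_append (u v : List Letter) : act (u ++ v) = xor (act u) (act v) := by
  rw [act, act, act, countA_append]
  cases h1 : decide (countA u % 2 = 1) <;> cases h2 : decide (countA v % 2 = 1) <;>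
    simp_all <;> omega

lemma gen_apply_cons (x : Letter) (d : Bool) (v : List Bool) :
    gen x (d :: v) = (xor (isA x) d) :: ev (secL x d) v := by
  cases x <;> cases d <;> rfl


lemma ev_apply_cons (w : List Letter) (c : Bool) (u : List Bool) :
    ev w (c :: u) = (xor (act w) c) :: ev (sec c w) u := by
  induction w with
  | nil => simp [sec, act, countA]
  | cons x w ih =>
    rw [ev_cons, Equiv.Perm.mul_apply, ih, gen_apply_cons, sec, ev_append,
      Equiv.Perm.mul_apply, act_cons]
    congr 1
    cases isA x <;> cases act w <;> cases c <;> rfl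

lemma sec_append (c : Bool) (u v : List Letter) :
    sec c (u ++ v) = sec (xor (act v) c) u ++ sec c v := by
  induction u with
  | nil => simp [sec]
  | cons x u ih =>
    show sec c ((x :: u) ++ v) = _
    rw [List.cons_append, sec, ih, sec, act_append, List.append_assoc]
    congr 2
    cases act u <;> cases act v <;> cases c <;> rfl

lemma sec_length (w : List Letter) :
    (sec false w).length + (sec true w).length = w.length := by
  induction w with
  | nil => rfl
  | cons x w ih =>
    rw [sec, sec, List.length_append, List.length_append, List.length_cons]
    cases x <;> cases act w <;> simp [secL] <;> omega

lemma sec_countA (w : List Letter) :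
    countA (sec false w) + countA (sec true w) = countB w := by
  induction w with
  | nil => rfl
  | cons x w ih =>
    rw [sec, sec, countA_append, countA_append]
    cases x <;> cases act w <;>
      simp [secL, countA, countB, List.countP_cons, isA] at * <;> omega

lemma sec_countB (w : List Letter) :
    countB (sec false w) + countB (sec true w) = countA w := by
  induction w with
  | nil => rfl
  | cons x w ih =>
    rw [sec, sec, countB_append, countB_append]
    cases x <;> cases act w <;>
      simp [secL, countA, countB, List.countP_cons, isA] at * <;> omega

lemma act_of_ev_eq_one {w : List Letter} (h : ev w = 1) : act w = false := by
  have := ev_apply_cons w false []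
  rw [h] at this
  simp at this
  cases hA : act w
  · rfl
  · rw [hA] at this; simp at this

lemma sec_of_ev_eq_one {w : List Letter} (h : ev w = 1) (c : Bool) :
    ev (sec c w) = 1 := by
  apply Equiv.ext
  intro u
  have := ev_apply_cons w c u
  rw [h, act_of_ev_eq_one h] at this
  simpa using this.symm

lemma active_ne_one {w : List Letter} (h : act w = true) : ev w ≠ 1 := by
  intro h1
  rw [act_of_ev_eq_one h1] at h
  exact Bool.false_ne_true h

lemma ev_eq_one_of_sec {w : List Letter} (hact : act w = false)
    (h : ∀ c, ev (sec c w) = 1) : ev w = 1 := by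
  apply Equiv.ext
  intro u
  cases u with
  | nil => simp
  | cons c x =>
    rw [ev_apply_cons, hact, h c]
    simp


def wpow (w : List Letter) : ℕ → List Letter
  | 0 => []
  | n + 1 => w ++ wpow w n

lemma ev_wpow (w : List Letter) (n : ℕ) : ev (wpow w n) = (ev w) ^ n := by
  induction n with
  | zero => rfl
  | succ n ih => rw [wpow, ev_append, ih, pow_succ']

lemma countA_wpow (w : List Letter) (n : ℕ) :
    countA (wpow w n) = n * countA w := by
  induction n with
  | zero => simp [wpow, countA]
  | succ n ih => rw [wpow, countA_append, ih]; ring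

lemma act_wpow_even {w : List Letter} {n : ℕ} (h : n % 2 = 0 ∨ act w = false) :
    act (wpow w n) = false := by
  rw [act, countA_wpow]
  rcases h with h | h
  · simp [Nat.mul_mod, h]
  · rw [act] at h
    simp only [decide_eq_false_iff_not] at h
    have : countA w % 2 = 0 := by omega
    simp [Nat.mul_mod, this]

lemma act_wpow_odd {w : List Letter} {n : ℕ} (hn : n % 2 = 1) (h : act w = true) :
    act (wpow w n) = true := by
  rw [act] at h ⊢
  rw [countA_wpow]
  simp only [decide_eq_true_eq] at h ⊢
  rw [Nat.mul_mod, hn, h]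

lemma sec_wpow {w : List Letter} (hact : act w = false) (c : Bool) (n : ℕ) :
    sec c (wpow w n) = wpow (sec c w) n := by
  induction n with
  | zero => rfl
  | succ n ih =>
    rw [wpow, sec_append, ih, act_wpow_even (Or.inr hact), wpow]
    cases c <;> rfl

def invL : Letter → Letter
  | A => A'
  | A' => A
  | B => B'
  | B' => B

def invW (w : List Letter) : List Letter := (w.map invL).reverse

lemma ev_invW (w : List Letter) : ev (invW w) = (ev w)⁻¹ := by
  induction w with
  | nil => simp [invW]
  | cons x w ih =>
    rw [invW, List.map_cons, List.reverse_cons, ev_append, ev_cons]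
    rw [show (w.map invL).reverse = invW w from rfl, ih]
    have h2 : gen (invL x) = (gen x)⁻¹ := by
      cases x <;> simp [invL, gen]
    rw [ev_cons, ev_nil, mul_one, h2, mul_inv_rev]

lemma exists_word {g : Equiv.Perm (List Bool)} (hg : g ∈ Gam) :
    ∃ w : List Letter, ev w = g := by
  induction hg using Subgroup.closure_induction with
  | mem x hx =>
    rcases hx with h | h
    · exact ⟨[A], by simp [ev, gen, h]⟩
    · exact ⟨[B], by simp [ev, gen]; rw [h]⟩
  | one => exact ⟨[], rfl⟩
  | mul x y _ _ ihx ihy =>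
    obtain ⟨u, hu⟩ := ihx
    obtain ⟨v, hv⟩ := ihy
    exact ⟨u ++ v, by rw [ev_append, hu, hv]⟩
  | inv x _ ihx =>
    obtain ⟨u, hu⟩ := ihx
    exact ⟨invW u, by rw [ev_invW, hu]⟩


lemma activeCase {l n : ℕ} (hn : n ≠ 0)
    (IH : ∀ m, m < n → m ≠ 0 → ∀ v : List Letter, v.length ≤ l →
      ev (wpow v m) = 1 → ev v = 1)
    {w : List Letter} (hlen : w.length ≤ l) (hact : act w = true)
    (hpow : ev (wpow w n) = 1) : False := by
  have hev : n % 2 = 0 := by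
    by_contra h2
    have h2' : n % 2 = 1 := by omega
    exact active_ne_one (act_wpow_odd h2' hact) hpow
  obtain ⟨m, hm⟩ : ∃ m, n = 2 * m := ⟨n / 2, by omega⟩
  have hm0 : m ≠ 0 := by omega
  have hmn : m < n := by omega
  have actW : act (w ++ w) = false := by rw [act_append, hact]; rfl
  have hWpow : ev (wpow (w ++ w) m) = 1 := by
    rw [ev_wpow, ev_append, ← sq, ← pow_mul, ← hm, ← ev_wpow, hpow]
  have husec : sec true w ++ sec false w = sec false (w ++ w) := by
    rw [sec_append, hact]; rfl
  have hupow : ev (wpow (sec true w ++ sec false w) m) = 1 := by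
    rw [husec, ← sec_wpow actW]
    exact sec_of_ev_eq_one hWpow false
  have hulen : (sec true w ++ sec false w).length ≤ l := by
    have := sec_length w
    rw [List.length_append]; omega
  have hu1 : ev (sec true w ++ sec false w) = 1 := IH m hmn hm0 _ hulen hupow
  have hsecu : ∀ c, countA (sec c (sec true w ++ sec false w)) % 2 = 0 := by
    intro c
    have h := act_of_ev_eq_one (sec_of_ev_eq_one hu1 c)
    rw [act] at h
    simp only [decide_eq_false_iff_not] at h
    omega
  have h1 := sec_countA (sec true w ++ sec false w)
  have h2 : countB (sec true w ++ sec false w) = countA w := by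
    rw [countB_append]
    have := sec_countB w
    omega
  have h3 : countA w % 2 = 1 := by
    rw [act] at hact
    simpa using hact
  have h4 := hsecu false
  have h5 := hsecu true
  omega


open Classical in
noncomputable def run (w : List Letter) : ℕ → List Letter
  | 0 => w
  | k + 1 => if ev (sec false (run w k)) = 1 then sec true (run w k)
             else sec false (run w k)

lemma key : ∀ l n : ℕ, ∀ w : List Letter, n ≠ 0 → w.length ≤ l →
    ev (wpow w n) = 1 → ev w = 1 := by
  intro l
  induction l using Nat.strong_induction_on with
  | _ l IHl =>
    intro n
    induction n using Nat.strong_induction_on with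
    | _ n IHn =>
      intro w hn hlen hpow
      by_contra hne
      rcases Nat.lt_or_ge w.length l with hl | hge
      · exact hne (IHl w.length hl n w hn le_rfl hpow)
      have hw : w.length = l := le_antisymm hlen hge
      have IH' : ∀ m, m < n → m ≠ 0 → ∀ v : List Letter, v.length ≤ l →
          ev (wpow v m) = 1 → ev v = 1 := fun m hm hm0 v hv hp => IHn m hm v hm0 hv hp
      -- the one-step analysis
      have step : ∀ v : List Letter, v.length = l → ev v ≠ 1 → ev (wpow v n) = 1 →
          act v = false ∧
          ∃ c : Bool, ev (sec c v) ≠ 1 ∧ (sec c v).length = l ∧ sec (!c) v = [] ∧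
            ev (wpow (sec c v) n) = 1 := by
        intro v hv hvne hvpow
        have hact : act v = false := by
          cases hA : act v
          · rfl
          · exact (activeCase hn IH' (hv.le) hA hvpow).elim
        have hsecpow : ∀ c, ev (wpow (sec c v) n) = 1 := by
          intro c
          rw [← sec_wpow hact]
          exact sec_of_ev_eq_one hvpow c
        have hex : ∃ c, ev (sec c v) ≠ 1 := by
          by_contra hall
          push_neg at hall
          exact hvne (ev_eq_one_of_sec hact hall)
        obtain ⟨c, hc⟩ := hex
        have hltc : ¬ (sec c v).length < l := fun hlt =>
          hc (IHl _ hlt n _ hn le_rfl (hsecpow c))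
        have hsum := sec_length v
        have hlc : l ≤ (sec c v).length := Nat.le_of_not_lt hltc
        refine ⟨hact, c, hc, ?_, ?_, hsecpow c⟩
        · cases c <;> omega
        · apply List.length_eq_zero_iff.mp
          cases c <;> simp only [Bool.not_true, Bool.not_false] <;> omega
      -- invariant along the run
      have R : ∀ k, (run w k).length = l ∧ ev (run w k) ≠ 1 ∧
          ev (wpow (run w k) n) = 1 := by
        intro k
        induction k with
        | zero => exact ⟨hw, hne, hpow⟩
        | succ k ih =>
          obtain ⟨h1, h2, h3⟩ := ih
          obtain ⟨hact, c, hc, hclen, hcempty, hcpow⟩ := step _ h1 h2 h3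
          cases c with
          | false =>
            have hrun : run w (k + 1) = sec false (run w k) := by
              rw [run, if_neg hc]
            rw [hrun]; exact ⟨hclen, hc, hcpow⟩
          | true =>
            have hf : ev (sec false (run w k)) = 1 := by
              rw [show (!true) = false from rfl] at hcempty
              rw [hcempty]; rfl
            have hrun : run w (k + 1) = sec true (run w k) := by
              rw [run, if_pos hf]
            rw [hrun]; exact ⟨hclen, hc, hcpow⟩
      have actR : ∀ k, act (run w k) = false := fun k =>
        (step _ (R k).1 (R k).2.1 (R k).2.2).1
      have Rel : ∀ k c, sec c (run w k) = run w (k + 1) ∨ sec c (run w k) = [] := by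
        intro k c
        obtain ⟨h1, h2, h3⟩ := R k
        obtain ⟨hact, c', hc', hlen', hemp', _⟩ := step _ h1 h2 h3
        have hrun : run w (k + 1) = sec c' (run w k) := by
          cases c' with
          | false => rw [run, if_neg hc']
          | true =>
            have hf : ev (sec false (run w k)) = 1 := by
              rw [show (!true) = false from rfl] at hemp'
              rw [hemp']; rfl
            rw [run, if_pos hf]
        by_cases hcc : c = c'
        · subst hcc; left; rw [hrun]
        · right
          have : c = !c' := by cases c <;> cases c' <;> simp_all
          rw [this]; exact hemp'
      have all : ∀ m k (u : List Bool), u.length ≤ m → ev (run w k) u = u := by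
        intro m
        induction m with
        | zero =>
          intro k u hu
          rw [List.length_eq_zero_iff.mp (Nat.le_zero.mp hu)]
          simp
        | succ m ih =>
          intro k u hu
          cases u with
          | nil => simp
          | cons c x =>
            rw [ev_apply_cons, actR k]
            rcases Rel k c with h | h
            · rw [h, ih (k + 1) x (by simpa using hu)]
              simp
            · rw [h]; simp
      exact hne (Equiv.ext fun u => by
        simpa [run] using all u.length 0 u le_rfl)

/-- The group `Γ` is torsion-free: every non-identity element of `Γ`
has infinite order. -/
theorem Gam_torsion_free :
    ∀ g ∈ Gam, g ≠ 1 → ∀ n : ℕ, g ^ n = 1 → n = 0 := by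
  intro g hg hne n hpow
  by_contra hn
  obtain ⟨w, rfl⟩ := exists_word hg
  exact hne (key w.length n w hn le_rfl (by rw [ev_wpow]; exact hpow))

end PinkGroup
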